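/- Let K be a set in a real vector space and f : K → ℝ explicitly quasiconvex, attaining its maximum M over K. Then the set E of maximizers of f is K-extremal: for any distinct x, y ∈ K with the open segment (x,y) meeting E (and contained in K), both x and y lie in E. -/
import Mathlib

theorem maximizers_extremal_of_explicitly_quasiconvex
    {V : Type*} [AddCommGroup V] [Module ℝ V]
    (K : Set V) (f : V → ℝ) (M : ℝ)
    (heqc : ∀ ⦃x⦄, x ∈ K → ∀ ⦃y⦄, y ∈ K → x ≠ y → ∀ ⦃l : ℝ⦄, l ∈ Set.Ioo (0:ℝ) 1 →
      l • x + (1 - l) • y ∈ K →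
      f (l • x + (1 - l) • y) ≤ max (f x) (f y) ∧
        (f x ≠ f y → f (l • x + (1 - l) • y) < max (f x) (f y)))
    (hub : ∀ x ∈ K, f x ≤ M) (hatt : ∃ x ∈ K, f x = M) :
    ∀ ⦃x⦄, x ∈ K → ∀ ⦃y⦄, y ∈ K → x ≠ y → openSegment ℝ x y ⊆ K →
      (openSegment ℝ x y ∩ {x ∈ K | f x = M}).Nonempty →
      x ∈ {x ∈ K | f x = M} ∧ y ∈ {x ∈ K | f x = M} := by
  intro x hx y hy hxy hseg ⟨z, hzseg, hzK, hzM⟩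
  obtain ⟨a, b, ha, hb, hab, hz⟩ := hzseg
  have hb' : b = 1 - a := by linarith
  have hIoo : a ∈ Set.Ioo (0:ℝ) 1 := ⟨ha, by linarith⟩
  have hzK' : a • x + (1 - a) • y ∈ K := by rw [← hb', hz]; exact hzK
  obtain ⟨h1, h2⟩ := heqc hx hy hxy hIoo hzK'
  rw [← hb', hz, hzM] at h1 h2
  have hfx : f x ≤ M := hub x hx
  have hfy : f y ≤ M := hub y hy
  have heq : f x = f y := by
    by_contra h
    have := h2 h
    rcases max_cases (f x) (f y) with ⟨he, _⟩ | ⟨he, _⟩ <;> rw [he] at this <;> linarith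
  have : max (f x) (f y) = f x := by simp [heq]
  rw [this] at h1
  have hfxM : f x = M := le_antisymm hfx h1
  exact ⟨⟨hx, hfxM⟩, ⟨hy, heq ▸ hfxM⟩⟩
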